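/- For the dephasing Kraus family and derivative family with 0 < p < 1 and reals φ, ṗ, φ̇, the infimum over 2×2 Hermitian matrices h of 4‖α(h)‖ equals (1−2p)² φ̇² + ṗ²/(p(1−p)), and this infimum is attained. -/

import Mathlib

set_option maxHeartbeats 1000000

open Matrix

/-- The ℓ²→ℓ² operator norm (largest singular value) of a complex matrix. -/
noncomputable def opNorm {m n : Type*} [Fintype m] [Fintype n] [DecidableEq n]
    (A : Matrix m n ℂ) : ℝ :=
  ‖LinearMap.toContinuousLinearMap (Matrix.toEuclideanLin A)‖

/-- `α(h) = ∑_i (K̇_i − i ∑_j h_{ij} K_j)† (K̇_i − i ∑_j h_{ij} K_j)`. -/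
noncomputable def krausAlpha {d d' r : ℕ} (K Kd : Fin r → Matrix (Fin d') (Fin d) ℂ)
    (h : Matrix (Fin r) (Fin r) ℂ) : Matrix (Fin d) (Fin d) ℂ :=
  ∑ i, (Kd i - Complex.I • ∑ j, h i j • K j)ᴴ * (Kd i - Complex.I • ∑ j, h i j • K j)

/-- `diag(e^{−iφ/2}, e^{iφ/2})`. -/
noncomputable def Dplus (φ : ℝ) : Matrix (Fin 2) (Fin 2) ℂ :=
  !![Complex.exp (-(Complex.I * φ / 2)), 0; 0, Complex.exp (Complex.I * φ / 2)]

/-- `diag(e^{−iφ/2}, −e^{iφ/2})`. -/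
noncomputable def Dminus (φ : ℝ) : Matrix (Fin 2) (Fin 2) ℂ :=
  !![Complex.exp (-(Complex.I * φ / 2)), 0; 0, -Complex.exp (Complex.I * φ / 2)]

/-- The dephasing Kraus family `K₁ = √(1−p)·diag(e^{−iφ/2}, e^{iφ/2})`,
`K₂ = √p·diag(e^{−iφ/2}, −e^{iφ/2})`. -/
noncomputable def dephK (p φ : ℝ) : Fin 2 → Matrix (Fin 2) (Fin 2) ℂ :=
  ![(Real.sqrt (1 - p) : ℂ) • Dplus φ, (Real.sqrt p : ℂ) • Dminus φ]

/-- The derivative family of the dephasing Kraus family, where `ṗ`, `φ̇` are the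
derivatives of `p`, `φ` with respect to the unknown parameter. -/
noncomputable def dephKdot (p φ pd φd : ℝ) : Fin 2 → Matrix (Fin 2) (Fin 2) ℂ :=
  ![((-pd / (2 * Real.sqrt (1 - p)) : ℝ) : ℂ) • Dplus φ -
      (Complex.I * (Real.sqrt (1 - p) * φd / 2)) • Dminus φ,
    ((pd / (2 * Real.sqrt p) : ℝ) : ℂ) • Dminus φ -
      (Complex.I * (Real.sqrt p * φd / 2)) • Dplus φ]

lemma opNorm_entry_le {m n : ℕ} (A : Matrix (Fin m) (Fin n) ℂ) (i : Fin m) (j : Fin n) :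
    ‖A i j‖ ≤ opNorm A := by
  have h1 : ‖(LinearMap.toContinuousLinearMap (Matrix.toEuclideanLin A))
        (EuclideanSpace.single j (1:ℂ))‖ ≤ opNorm A * ‖EuclideanSpace.single j (1:ℂ)‖ :=
    ContinuousLinearMap.le_opNorm _ _
  rw [EuclideanSpace.norm_single, norm_one, mul_one] at h1
  refine le_trans ?_ h1
  set yv := (LinearMap.toContinuousLinearMap (Matrix.toEuclideanLin A))
      (EuclideanSpace.single j (1:ℂ)) with hyv
  have h2 : ‖(inner ℂ (EuclideanSpace.single i (1:ℂ)) yv : ℂ)‖ ≤ 1 * ‖yv‖ := by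
    simpa [EuclideanSpace.norm_single] using norm_inner_le_norm (𝕜 := ℂ)
      (EuclideanSpace.single i (1:ℂ)) yv
  rw [one_mul] at h2
  refine le_trans (le_of_eq ?_) h2
  rw [EuclideanSpace.inner_single_left]
  have h3 : yv i = A i j := by
    show (Matrix.toEuclideanLin A) (EuclideanSpace.single j (1:ℂ)) i = A i j
    rw [Matrix.toEuclideanLin_apply]
    show (A *ᵥ (Pi.single j (1:ℂ))) i = A i j
    rw [Matrix.mulVec_single]
    simp
  rw [h3]
  simp

lemma opNorm_smul_one (c : ℝ) :
    opNorm (((c : ℝ) : ℂ) • (1 : Matrix (Fin 2) (Fin 2) ℂ)) = |c| := by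
  unfold opNorm
  rw [_root_.map_smul, _root_.map_smul]
  rw [norm_smul ((c:ℝ):ℂ) (LinearMap.toContinuousLinearMap
    (Matrix.toEuclideanLin (1 : Matrix (Fin 2) (Fin 2) ℂ)))]
  have h1 : Matrix.toEuclideanLin (1 : Matrix (Fin 2) (Fin 2) ℂ) = LinearMap.id := by
    rw [Matrix.toEuclideanLin_eq_toLin, Matrix.toLin_one]
  rw [h1]
  have h2 : (LinearMap.toContinuousLinearMap
      (LinearMap.id : EuclideanSpace ℂ (Fin 2) →ₗ[ℂ] EuclideanSpace ℂ (Fin 2))) =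
      ContinuousLinearMap.id ℂ (EuclideanSpace ℂ (Fin 2)) := by
    ext x; rfl
  rw [h2, ContinuousLinearMap.norm_id]
  simp [Complex.norm_real]

lemma alpha_aux (s t a b φd x y u v : ℝ) (w1 w2 : ℂ)
    (hc1 : (starRingEnd ℂ) w1 = w2) (hc2 : (starRingEnd ℂ) w2 = w1) (hw : w1 * w2 = 1) :
    krausAlpha
      ![(s : ℂ) • !![w1, 0; 0, w2], (t : ℂ) • !![w1, 0; 0, -w2]]
      ![((a : ℝ) : ℂ) • !![w1, 0; 0, w2] - (Complex.I * (s * φd / 2)) • !![w1, 0; 0, -w2],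
        ((b : ℝ) : ℂ) • !![w1, 0; 0, -w2] - (Complex.I * (t * φd / 2)) • !![w1, 0; 0, w2]]
      !![(x:ℂ), (u:ℂ) + v*Complex.I; (u:ℂ) - v*Complex.I, (y:ℂ)] =
    !![(((a + v*t)^2 + (x*s + s*φd/2 + u*t)^2 + (b - v*s)^2
          + (t*φd/2 + u*s + y*t)^2 : ℝ) : ℂ), 0;
       0, (((a - v*t)^2 + (x*s - s*φd/2 - u*t)^2 + (b + v*s)^2
          + (t*φd/2 + u*s - y*t)^2 : ℝ) : ℂ)] := by
  have hI4 : Complex.I ^ 4 = 1 := by simp [pow_succ, Complex.I_mul_I]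
  ext i j
  fin_cases i <;> fin_cases j <;>
    simp [krausAlpha, Fin.sum_univ_two, Matrix.mul_apply, Matrix.conjTranspose_apply,
      map_sub, map_add, _root_.map_mul, map_div₀, map_ofNat, Complex.conj_I,
      Complex.conj_ofReal, hc1, hc2]
  · linear_combination (norm := (ring_nf; simp only [Complex.I_sq, hI4]; ring1))
      (((a:ℂ) + v*t)^2 + ((x:ℂ)*s + s*φd/2 + u*t)^2 + ((b:ℂ) - v*s)^2
        + ((t:ℂ)*φd/2 + u*s + y*t)^2) * hw
  · linear_combination (norm := (ring_nf; simp only [Complex.I_sq, hI4]; ring1))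
      (((a:ℂ) - v*t)^2 + ((x:ℂ)*s - s*φd/2 - u*t)^2 + ((b:ℂ) + v*s)^2
        + ((t:ℂ)*φd/2 + u*s - y*t)^2) * hw

lemma alpha_deph (p φ pd φd x y u v : ℝ) :
    krausAlpha (dephK p φ) (dephKdot p φ pd φd)
      !![(x:ℂ), (u:ℂ) + v*Complex.I; (u:ℂ) - v*Complex.I, (y:ℂ)] =
    !![((((-pd/(2*Real.sqrt (1-p))) + v*Real.sqrt p)^2
          + (x*Real.sqrt (1-p) + Real.sqrt (1-p)*φd/2 + u*Real.sqrt p)^2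
          + ((pd/(2*Real.sqrt p)) - v*Real.sqrt (1-p))^2
          + (Real.sqrt p*φd/2 + u*Real.sqrt (1-p) + y*Real.sqrt p)^2 : ℝ) : ℂ), 0;
       0, ((((-pd/(2*Real.sqrt (1-p))) - v*Real.sqrt p)^2
          + (x*Real.sqrt (1-p) - Real.sqrt (1-p)*φd/2 - u*Real.sqrt p)^2
          + ((pd/(2*Real.sqrt p)) + v*Real.sqrt (1-p))^2
          + (Real.sqrt p*φd/2 + u*Real.sqrt (1-p) - y*Real.sqrt p)^2 : ℝ) : ℂ)] := by
  have hc1 : (starRingEnd ℂ) (Complex.exp (-(Complex.I * φ / 2)))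
      = Complex.exp (Complex.I * φ / 2) := by
    rw [← Complex.exp_conj]
    congr 1
    simp only [map_neg, map_div₀, _root_.map_mul, map_ofNat, Complex.conj_I,
      Complex.conj_ofReal]
    ring
  have hc2 : (starRingEnd ℂ) (Complex.exp (Complex.I * φ / 2))
      = Complex.exp (-(Complex.I * φ / 2)) := by
    rw [← Complex.exp_conj]
    congr 1
    simp only [map_neg, map_div₀, _root_.map_mul, map_ofNat, Complex.conj_I,
      Complex.conj_ofReal]
    ring
  have hw : Complex.exp (-(Complex.I * φ / 2)) * Complex.exp (Complex.I * φ / 2) = 1 := by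
    rw [← Complex.exp_add, neg_add_cancel, Complex.exp_zero]
  exact alpha_aux (Real.sqrt (1-p)) (Real.sqrt p) (-pd/(2*Real.sqrt (1-p)))
    (pd/(2*Real.sqrt p)) φd x y u v _ _ hc1 hc2 hw

lemma herm_decomp (h : Matrix (Fin 2) (Fin 2) ℂ) (hh : h.IsHermitian) :
    ∃ x y u v : ℝ, h = !![(x:ℂ), (u:ℂ) + v*Complex.I; (u:ℂ) - v*Complex.I, (y:ℂ)] := by
  refine ⟨(h 0 0).re, (h 1 1).re, (h 0 1).re, (h 0 1).im, ?_⟩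
  have h00 := hh.apply 0 0
  have h11 := hh.apply 1 1
  have h10 : h 1 0 = (starRingEnd ℂ) (h 0 1) := by
    rw [← hh.apply 0 1, RCLike.star_def, Complex.conj_conj]
  have him0 : (h 0 0).im = 0 := Complex.conj_eq_iff_im.mp h00
  have him1 : (h 1 1).im = 0 := Complex.conj_eq_iff_im.mp h11
  ext i j
  fin_cases i <;> fin_cases j
  · show h 0 0 = ((h 0 0).re : ℂ)
    apply Complex.ext <;> simp [him0]
  · show h 0 1 = ((h 0 1).re : ℂ) + (h 0 1).im * Complex.I
    exact (Complex.re_add_im (h 0 1)).symm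
  · show h 1 0 = ((h 0 1).re : ℂ) - (h 0 1).im * Complex.I
    rw [h10]
    apply Complex.ext <;> simp
  · show h 1 1 = ((h 1 1).re : ℂ)
    apply Complex.ext <;> simp [him1]

theorem dephasing_single_channel_QFI (p φ pd φd : ℝ) (hp0 : 0 < p) (hp1 : p < 1) :
    IsLeast
      {x : ℝ | ∃ h : Matrix (Fin 2) (Fin 2) ℂ, h.IsHermitian ∧
        x = 4 * opNorm (krausAlpha (dephK p φ) (dephKdot p φ pd φd) h)}
      ((1 - 2 * p) ^ 2 * φd ^ 2 + pd ^ 2 / (p * (1 - p))) := by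
  set s := Real.sqrt (1 - p) with hsdef
  set t := Real.sqrt p with htdef
  have hs : (0:ℝ) < s := Real.sqrt_pos.2 (by linarith)
  have ht : (0:ℝ) < t := Real.sqrt_pos.2 hp0
  have hs2 : s ^ 2 = 1 - p := Real.sq_sqrt (by linarith)
  have ht2 : t ^ 2 = p := Real.sq_sqrt hp0.le
  have hst : s ^ 2 + t ^ 2 = 1 := by rw [hs2, ht2]; ring
  -- rewrite the target constant in terms of s and t
  have hM : (1 - 2 * p) ^ 2 * φd ^ 2 + pd ^ 2 / (p * (1 - p))
      = (s^2 - t^2)^2 * φd^2 + pd^2/s^2 + pd^2/t^2 := by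
    have e1 : (s^2 - t^2)^2 = (1 - 2*p)^2 := by rw [hs2, ht2]; ring
    have hne1 : ((1:ℝ)-p) * p ≠ 0 := by
      have : (0:ℝ) < (1-p) * p := by nlinarith
      exact this.ne'
    have hne2 : p * ((1:ℝ)-p) ≠ 0 := by
      have : (0:ℝ) < p * (1-p) := by nlinarith
      exact this.ne'
    have e2 : pd^2/s^2 + pd^2/t^2 = pd^2 / (p * (1-p)) := by
      rw [div_add_div _ _ (by positivity) (by positivity), hs2, ht2,
        div_eq_div_iff hne1 hne2]
      ring
    rw [e1, ← e2]
    ring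
  constructor
  · -- membership : the optimal h
    refine ⟨!![((0:ℝ):ℂ), ((-(s*t*φd) : ℝ):ℂ) + (0:ℝ)*Complex.I;
        ((-(s*t*φd) : ℝ):ℂ) - (0:ℝ)*Complex.I, ((0:ℝ):ℂ)], ?_, ?_⟩
    · show _ᴴ = _
      ext i j
      fin_cases i <;> fin_cases j <;>
        simp [Matrix.conjTranspose_apply, Complex.conj_ofReal]
    · rw [alpha_deph p φ pd φd 0 0 (-(s*t*φd)) 0]
      rw [← hsdef, ← htdef]
      set c : ℝ := ((-pd/(2*s)) + 0*t)^2 + (0*s + s*φd/2 + (-(s*t*φd))*t)^2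
        + ((pd/(2*t)) - 0*s)^2 + (t*φd/2 + (-(s*t*φd))*s + 0*t)^2 with hcdef
      have hFm : ((-pd/(2*s)) - 0*t)^2 + (0*s - s*φd/2 - (-(s*t*φd))*t)^2
          + ((pd/(2*t)) + 0*s)^2 + (t*φd/2 + (-(s*t*φd))*s - 0*t)^2 = c := by
        rw [hcdef]; ring
      rw [hFm]
      have hmat : (!![((c:ℝ):ℂ), 0; 0, ((c:ℝ):ℂ)] : Matrix (Fin 2) (Fin 2) ℂ)
          = ((c:ℝ):ℂ) • (1 : Matrix (Fin 2) (Fin 2) ℂ) := by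
        ext i j
        fin_cases i <;> fin_cases j <;> simp [Matrix.one_apply]
      rw [hmat, opNorm_smul_one]
      have hc0 : 0 ≤ c := by rw [hcdef]; positivity
      rw [abs_of_nonneg hc0, hM]
      have key : 4 * c = (s^2 - t^2)^2*φd^2 + pd^2/s^2 + pd^2/t^2
          + 4*((-(s*t*φd)) + s*t*φd)^2
          + (s^2 + t^2 - 1) * (4*(-(s*t*φd))^2 - (s^2+t^2)*φd^2) := by
        rw [hcdef]
        field_simp
        ring
      rw [hst] at key
      rw [key]
      ring
  · -- lower bound
    rintro w ⟨h, hh, rfl⟩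
    obtain ⟨x, y, u, v, rfl⟩ := herm_decomp h hh
    rw [alpha_deph p φ pd φd x y u v, ← hsdef, ← htdef]
    set Fp : ℝ := ((-pd/(2*s)) + v*t)^2 + (x*s + s*φd/2 + u*t)^2
      + ((pd/(2*t)) - v*s)^2 + (t*φd/2 + u*s + y*t)^2 with hFpdef
    set Fm : ℝ := ((-pd/(2*s)) - v*t)^2 + (x*s - s*φd/2 - u*t)^2
      + ((pd/(2*t)) + v*s)^2 + (t*φd/2 + u*s - y*t)^2 with hFmdef
    have hbp : Fp ≤ opNorm (!![((Fp:ℝ):ℂ), 0; 0, ((Fm:ℝ):ℂ)]) := by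
      have := opNorm_entry_le (!![((Fp:ℝ):ℂ), 0; 0, ((Fm:ℝ):ℂ)]) 0 0
      simp only [Matrix.cons_val', Matrix.cons_val_zero, Matrix.empty_val',
        Matrix.cons_val_fin_one, Matrix.of_apply, Complex.norm_real,
        Real.norm_eq_abs] at this
      exact le_trans (le_abs_self Fp) this
    have hbm : Fm ≤ opNorm (!![((Fp:ℝ):ℂ), 0; 0, ((Fm:ℝ):ℂ)]) := by
      have := opNorm_entry_le (!![((Fp:ℝ):ℂ), 0; 0, ((Fm:ℝ):ℂ)]) 1 1
      simp only [Matrix.cons_val', Matrix.cons_val_zero, Matrix.cons_val_one,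
        Matrix.head_cons, Matrix.empty_val', Matrix.cons_val_fin_one, Matrix.of_apply,
        Matrix.head_fin_const, Complex.norm_real, Real.norm_eq_abs] at this
      exact le_trans (le_abs_self Fm) this
    have key : 2 * (Fp + Fm) = (s^2-t^2)^2*φd^2 + pd^2/s^2 + pd^2/t^2
        + 4*v^2*(s^2+t^2) + 4*(x*s)^2 + 4*(y*t)^2 + 4*(u + s*t*φd)^2
        - (s^2+t^2-1) * ((s^2+t^2)*φd^2 - 4*u^2) := by
      rw [hFpdef, hFmdef]
      field_simp
      ring
    rw [hst] at key
    have hnn : 0 ≤ 4*v^2 + 4*(x*s)^2 + 4*(y*t)^2 + 4*(u + s*t*φd)^2 := by positivity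
    rw [hM]
    have h2 : (s^2-t^2)^2*φd^2 + pd^2/s^2 + pd^2/t^2 ≤ 2*(Fp+Fm) := by
      rw [key]
      linarith [hnn]
    have h3 : 2*(Fp+Fm) ≤ 4 * opNorm (!![((Fp:ℝ):ℂ), 0; 0, ((Fm:ℝ):ℂ)]) := by
      linarith [hbp, hbm]
    exact le_trans h2 h3
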